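/- Let K be a real number and let f be a C² function on an open interval I ⊆ ℝ with f ≥ 0 on I and f''(t) + K f(t) ≤ 0 for all t ∈ I. If f(t₀) = 0 for some t₀ ∈ I, then f is identically 0 on I. -/

import Mathlib

open Set

private lemma key_lemma (C : ℝ) (hC : 0 ≤ C) (f : ℝ → ℝ) (I : Set ℝ) (hI : IsOpen I)
    (hd1 : DifferentiableOn ℝ f I) (hd2 : DifferentiableOn ℝ (deriv f) I)
    (hnonneg : ∀ t ∈ I, 0 ≤ f t) (hineq : ∀ t ∈ I, deriv (deriv f) t ≤ C * f t)
    (a b t₀ : ℝ) (hsub : Set.Icc a b ⊆ I) (hat : a ≤ t₀) (htb : t₀ ≤ b)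
    (hzero : f t₀ = 0) (hzero' : deriv f t₀ = 0) (hsmall : C * (b - a) ^ 2 / 2 < 1) :
    ∀ t ∈ Set.Icc a b, f t = 0 := by
  have ht₀ab : t₀ ∈ Icc a b := ⟨hat, htb⟩
  have hcont : ContinuousOn f (Icc a b) := (hd1.mono hsub).continuousOn
  obtain ⟨c, hc, hmax⟩ := isCompact_Icc.exists_isMaxOn ⟨t₀, ht₀ab⟩ hcont
  set M := f c with hMdef
  have hmax' : ∀ x ∈ Icc a b, f x ≤ M := hmax
  have hM0 : 0 ≤ M := hnonneg c (hsub hc)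
  -- the auxiliary function g
  set g : ℝ → ℝ := fun t => C * M * (t - t₀) - deriv f t with hgdef
  have hgderiv : ∀ x ∈ I, HasDerivAt g (C * M - deriv (deriv f) x) x := by
    intro x hx
    have h1 : HasDerivAt (fun t : ℝ => C * M * (t - t₀)) (C * M * 1) x :=
      ((hasDerivAt_id x).sub_const t₀).const_mul (C * M)
    have h2 : HasDerivAt (deriv f) (deriv (deriv f) x) x :=
      (hd2.differentiableAt (hI.mem_nhds hx)).hasDerivAt
    exact (h1.sub h2).congr_deriv (by ring)
  have hgmono : MonotoneOn g (Icc a b) := by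
    apply monotoneOn_of_deriv_nonneg (convex_Icc a b)
    · exact ((continuous_const.mul (continuous_id.sub continuous_const)).continuousOn).sub
        ((hd2.mono hsub).continuousOn)
    · intro x hx
      have hx' : x ∈ I := hsub (interior_subset hx)
      exact ((hgderiv x hx').differentiableAt).differentiableWithinAt
    · intro x hx
      have hxab : x ∈ Icc a b := interior_subset hx
      have hx' : x ∈ I := hsub hxab
      rw [(hgderiv x hx').deriv]
      have h1 : deriv (deriv f) x ≤ C * f x := hineq x hx'
      have h2 : C * f x ≤ C * M := mul_le_mul_of_nonneg_left (hmax' x hxab) hC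
      linarith
  have hgt₀ : g t₀ = 0 := by simp [hgdef, hzero']
  -- the auxiliary function h
  set h : ℝ → ℝ := fun t => C * M / 2 * (t - t₀) ^ 2 - f t with hhdef
  have hhderiv : ∀ x ∈ I, HasDerivAt h (g x) x := by
    intro x hx
    have base := (((hasDerivAt_id x).sub_const t₀).pow 2).const_mul (C * M / 2)
    simp only [id_eq] at base
    have h1 : HasDerivAt (fun t : ℝ => C * M / 2 * (t - t₀) ^ 2)
        (g x + deriv f x) x := by
      exact base.congr_deriv (by simp only [hgdef]; push_cast; ring)
    have h2 : HasDerivAt f (deriv f x) x :=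
      (hd1.differentiableAt (hI.mem_nhds hx)).hasDerivAt
    have := h1.sub h2
    exact this.congr_deriv (by ring)
  have hhcont : ContinuousOn h (Icc a b) :=
    ((continuous_const.mul ((continuous_id.sub continuous_const).pow 2))
      ).continuousOn.sub hcont
  have hht₀ : h t₀ = 0 := by simp [hhdef, hzero]
  -- h is antitone on [a,t₀] and monotone on [t₀,b], hence h ≥ 0 on [a,b]
  have hhub : ∀ t ∈ Icc a b, 0 ≤ h t := by
    intro t ht
    rcases le_total t t₀ with htt | htt
    · have hanti : AntitoneOn h (Icc a t₀) := by
        apply antitoneOn_of_deriv_nonpos (convex_Icc a t₀)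
        · exact hhcont.mono (Icc_subset_Icc le_rfl htb)
        · intro x hx
          rw [interior_Icc] at hx
          have hx' : x ∈ I := hsub ⟨le_of_lt hx.1, le_trans (le_of_lt hx.2) htb⟩
          exact ((hhderiv x hx').differentiableAt).differentiableWithinAt
        · intro x hx
          rw [interior_Icc] at hx
          have hxab : x ∈ Icc a b := ⟨le_of_lt hx.1, le_trans (le_of_lt hx.2) htb⟩
          rw [(hhderiv x (hsub hxab)).deriv]
          have := hgmono hxab ht₀ab (le_of_lt hx.2)
          linarith [hgt₀]
      have := hanti ⟨ht.1, htt⟩ ⟨hat, le_rfl⟩ htt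
      linarith [hht₀]
    · have hmono : MonotoneOn h (Icc t₀ b) := by
        apply monotoneOn_of_deriv_nonneg (convex_Icc t₀ b)
        · exact hhcont.mono (Icc_subset_Icc hat le_rfl)
        · intro x hx
          rw [interior_Icc] at hx
          have hx' : x ∈ I := hsub ⟨le_trans hat (le_of_lt hx.1), le_of_lt hx.2⟩
          exact ((hhderiv x hx').differentiableAt).differentiableWithinAt
        · intro x hx
          rw [interior_Icc] at hx
          have hxab : x ∈ Icc a b := ⟨le_trans hat (le_of_lt hx.1), le_of_lt hx.2⟩
          rw [(hhderiv x (hsub hxab)).deriv]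
          have := hgmono ht₀ab hxab (le_of_lt hx.1)
          linarith [hgt₀]
      have := hmono ⟨le_rfl, htb⟩ ⟨htt, ht.2⟩ htt
      linarith [hht₀]
  -- conclude M = 0
  have hbound : M ≤ C * M * (b - a) ^ 2 / 2 := by
    have h1 := hhub c hc
    have h2 : (c - t₀) ^ 2 ≤ (b - a) ^ 2 := by
      have := hc.1; have := hc.2; have := ht₀ab.1; have := ht₀ab.2
      nlinarith
    have h3 : C * M * (c - t₀) ^ 2 ≤ C * M * (b - a) ^ 2 :=
      mul_le_mul_of_nonneg_left h2 (mul_nonneg hC hM0)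
    simp only [hhdef] at h1
    linarith
  have hMzero : M = 0 := by nlinarith
  intro t ht
  exact le_antisymm (hMzero ▸ hmax' t ht) (hnonneg t (hsub ht))

/-- **Maximum principle for `f'' + K f ≤ 0`.**
If `f` is a `C²` function on an open interval `I ⊆ ℝ` with `f ≥ 0` on `I` and
`f'' + K f ≤ 0` on `I`, and `f` vanishes at some point of `I`, then `f ≡ 0` on `I`. -/
theorem statement_0 (K : ℝ) (I : Set ℝ) (hI : IsOpen I) (hIconv : Convex ℝ I)
    (f : ℝ → ℝ) (hf : ContDiffOn ℝ 2 f I)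
    (hnonneg : ∀ t ∈ I, 0 ≤ f t)
    (hineq : ∀ t ∈ I, deriv (deriv f) t + K * f t ≤ 0)
    (t₀ : ℝ) (ht₀ : t₀ ∈ I) (hzero : f t₀ = 0) :
    ∀ t ∈ I, f t = 0 := by
  set C := |K| with hCdef
  have hC : 0 ≤ C := abs_nonneg K
  have hd1 : DifferentiableOn ℝ f I := hf.differentiableOn (by norm_num)
  have hd2 : DifferentiableOn ℝ (deriv f) I :=
    (hf.deriv_of_isOpen (m := 1) hI (by norm_num)).differentiableOn one_ne_zero
  have hineq' : ∀ t ∈ I, deriv (deriv f) t ≤ C * f t := by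
    intro t ht
    have h1 := hineq t ht
    have h2 : -K * f t ≤ C * f t :=
      mul_le_mul_of_nonneg_right (neg_le_abs K) (hnonneg t ht)
    linarith
  -- the set of zeros inside I
  set u : Set ℝ := {t | t ∈ I ∧ f t = 0} with hudef
  have hu_open : IsOpen u := by
    rw [Metric.isOpen_iff]
    intro t₁ ht₁
    obtain ⟨ht₁I, hft₁⟩ := ht₁
    have hlocmin : IsLocalMin f t₁ := by
      filter_upwards [hI.mem_nhds ht₁I] with x hx
      rw [hft₁]; exact hnonneg x hx
    have hderiv0 : deriv f t₁ = 0 := hlocmin.deriv_eq_zero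
    obtain ⟨r, hr, hball⟩ := Metric.isOpen_iff.1 hI t₁ ht₁I
    set ε := min (r / 2) (1 / (2 * (C + 1))) with hεdef
    have hε : 0 < ε := lt_min (by linarith) (by positivity)
    have hsub : Icc (t₁ - ε) (t₁ + ε) ⊆ I := by
      intro x hx
      apply hball
      rw [Metric.mem_ball, Real.dist_eq]
      have h1 : ε ≤ r / 2 := min_le_left _ _
      rw [abs_lt]
      constructor <;> [linarith [hx.1]; linarith [hx.2]]
    have hsmall : C * ((t₁ + ε) - (t₁ - ε)) ^ 2 / 2 < 1 := by
      have h2 : ε ≤ 1 / (2 * (C + 1)) := min_le_right _ _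
      have h3 : (t₁ + ε) - (t₁ - ε) = 2 * ε := by ring
      rw [h3]
      have h4 : ε * (2 * (C + 1)) ≤ 1 := by
        rw [le_div_iff₀ (by positivity : (0:ℝ) < 2 * (C + 1))] at h2; linarith
      nlinarith
    have hzeros := key_lemma C hC f I hI hd1 hd2 hnonneg hineq'
      (t₁ - ε) (t₁ + ε) t₁ hsub (by linarith) (by linarith) hft₁ hderiv0 hsmall
    refine ⟨ε, hε, fun x hx => ?_⟩
    rw [Metric.mem_ball, Real.dist_eq, abs_lt] at hx
    have hxIcc : x ∈ Icc (t₁ - ε) (t₁ + ε) := ⟨by linarith [hx.1], by linarith [hx.2]⟩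
    exact ⟨hsub hxIcc, hzeros x hxIcc⟩
  have hclos : closure u ∩ I ⊆ u := by
    rintro t ⟨htc, htI⟩
    refine ⟨htI, ?_⟩
    have hca : ContinuousAt f t := (hd1.differentiableAt (hI.mem_nhds htI)).continuousAt
    have h1 : f t ∈ closure (f '' u) := hca.continuousWithinAt.mem_closure_image htc
    have h2 : f '' u ⊆ {(0 : ℝ)} := by
      rintro y ⟨x, hx, rfl⟩; exact hx.2
    have h3 : closure (f '' u) ⊆ {(0 : ℝ)} := closure_minimal h2 isClosed_singleton
    exact h3 h1
  have := hIconv.isPreconnected.subset_of_closure_inter_subset hu_open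
    ⟨t₀, ht₀, ht₀, hzero⟩ hclos
  intro t ht
  exact (this ht).2
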